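/- For the harmonic-oscillator displacement operator D(α) = exp(α a† − α* a) and number state |n⟩, the diagonal matrix element is ⟨n| D(α) |n⟩ = e^{−|α|²/2} L_n(|α|²), where L_n is the n-th Laguerre polynomial. -/

import Mathlib

noncomputable section

/-- The `n`-th Laguerre polynomial `L_n(x) = Σ_{k=0}^n C(n,k) (−x)^k / k!`. -/
def laguerre (n : ℕ) (x : ℝ) : ℝ :=
  ∑ k ∈ Finset.range (n + 1), (n.choose k : ℝ) * (-x) ^ k / (Nat.factorial k)

/-- Matrix element `⟨m| e^{α a†} |j⟩ = α^{m−j}/(m−j)! · √(m!/j!)` (zero unless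
`j ≤ m`). -/
def expRaise (α : ℂ) (m j : ℕ) : ℂ :=
  if j ≤ m then α ^ (m - j) / (Nat.factorial (m - j)) *
    Real.sqrt ((Nat.factorial m : ℝ) / (Nat.factorial j)) else 0

/-- Matrix element `⟨j| e^{β a} |n⟩ = β^{n−j}/(n−j)! · √(n!/j!)` (zero unless
`j ≤ n`). -/
def expLower (β : ℂ) (j n : ℕ) : ℂ :=
  if j ≤ n then β ^ (n - j) / (Nat.factorial (n - j)) *
    Real.sqrt ((Nat.factorial n : ℝ) / (Nat.factorial j)) else 0

/-- Matrix elements of the displacement operator `D(α) = e^{αa†−α*a}` via its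
normally ordered form `D(α) = e^{−|α|²/2} e^{α a†} e^{−α* a}`. -/
def displacement (α : ℂ) (m n : ℕ) : ℂ :=
  Complex.exp (-((‖α‖ : ℂ) ^ 2) / 2) *
    ∑ j ∈ Finset.range (min m n + 1), expRaise α m j * expLower (-(starRingEnd ℂ) α) j n

/-- the diagonal matrix element of the displacement operator in
the number basis is `⟨n|D(α)|n⟩ = e^{−|α|²/2} L_n(|α|²)`. -/
theorem stmt11 (α : ℂ) (n : ℕ) :
    displacement α n n
      = Complex.exp (-((‖α‖ : ℂ) ^ 2) / 2) *
        (laguerre n (‖α‖ ^ 2) : ℝ) := by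
  unfold displacement
  congr 1
  rw [min_self, ← Finset.sum_range_reflect]
  unfold laguerre
  push_cast
  apply Finset.sum_congr rfl
  intro k hk
  rw [Finset.mem_range, Nat.lt_succ_iff] at hk
  simp only [expRaise, expLower, Nat.add_sub_cancel, if_pos (Nat.sub_le n k),
    Nat.sub_sub_self hk]
  have hsq : (Real.sqrt ((Nat.factorial n : ℝ) / (Nat.factorial (n - k))) : ℂ) *
      (Real.sqrt ((Nat.factorial n : ℝ) / (Nat.factorial (n - k))) : ℂ)
      = (Nat.factorial n : ℂ) / (Nat.factorial (n - k) : ℂ) := by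
    rw [← Complex.ofReal_mul, Real.mul_self_sqrt (by positivity)]
    push_cast
    ring
  have key : α ^ k * (-(starRingEnd ℂ) α) ^ k = (-(‖α‖ : ℂ) ^ 2) ^ k := by
    rw [← mul_pow, mul_neg, Complex.mul_conj, ← Complex.sq_norm]
    push_cast
    ring
  have hchoose : ((n.choose k : ℕ) : ℂ) =
      (Nat.factorial n : ℂ) / ((Nat.factorial k : ℂ) * (Nat.factorial (n - k) : ℂ)) :=
    Nat.cast_choose ℂ hk
  have hk0 : (Nat.factorial k : ℂ) ≠ 0 := by exact_mod_cast (Nat.factorial_pos k).ne'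
  have hnk0 : (Nat.factorial (n - k) : ℂ) ≠ 0 := by
    exact_mod_cast (Nat.factorial_pos (n - k)).ne'
  set S : ℂ := (Real.sqrt ((Nat.factorial n : ℝ) / (Nat.factorial (n - k))) : ℂ)
  have lhs : α ^ k / (Nat.factorial k : ℂ) * S *
      ((-(starRingEnd ℂ) α) ^ k / (Nat.factorial k : ℂ) * S)
      = (α ^ k * (-(starRingEnd ℂ) α) ^ k) * (S * S) / ((Nat.factorial k : ℂ) ^ 2) := by
    ring
  rw [lhs, key, hsq, hchoose]
  field_simp

end
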